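/- Monotonicity of the auxiliary function θ and uniqueness of the zero of the comparison function (Lemma 5.8): Let α ∈ G ∪ N and let u be the corresponding solution. Then θ(τ) = −sinh(τ)·u'(τ)/u(τ) is non-decreasing on (0, b(α)), and consequently for every β > 0 the function v_β(τ) = sinh(τ)·u'(τ) + β·u(τ) has exactly one zero in (0, b(α)). -/

import Mathlib

open Set Filter

noncomputable def Gf (m a b s : ℝ) : ℝ := a * (m/(2*m+2)) * s ^ (2+2/m) - b/2 * s^2
noncomputable def Hf (m a b : ℝ) (u : ℝ → ℝ) (τ : ℝ) : ℝ := (deriv u τ)^2/2 + Gf m a b (u τ)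

lemma sinh_mul_deriv (u F : ℝ → ℝ)
    (hud' : ∀ τ ∈ Ioi (0:ℝ), DifferentiableAt ℝ (deriv u) τ)
    (hode : ∀ τ ∈ Ioi (0:ℝ), deriv (deriv u) τ + (Real.cosh τ / Real.sinh τ) * deriv u τ + F (u τ) = 0)
    {τ : ℝ} (hτ : 0 < τ) :
    HasDerivAt (fun t => Real.sinh t * deriv u t) (-(Real.sinh τ * F (u τ))) τ := by
  have hs : (0:ℝ) < Real.sinh τ := Real.sinh_pos_iff.2 hτ
  have h1 : HasDerivAt (fun t => Real.sinh t * deriv u t)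
      (Real.cosh τ * deriv u τ + Real.sinh τ * deriv (deriv u) τ) τ :=
    (Real.hasDerivAt_sinh τ).mul ((hud' τ hτ).hasDerivAt)
  convert h1 using 1
  have h2 := hode τ hτ
  have h3 : deriv (deriv u) τ = -((Real.cosh τ / Real.sinh τ) * deriv u τ + F (u τ)) := by
    linarith
  rw [h3]
  field_simp
  ring

lemma theta_hasDeriv (u F : ℝ → ℝ)
    (hud : ∀ τ ∈ Ioi (0:ℝ), DifferentiableAt ℝ u τ)
    (hud' : ∀ τ ∈ Ioi (0:ℝ), DifferentiableAt ℝ (deriv u) τ)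
    (hode : ∀ τ ∈ Ioi (0:ℝ), deriv (deriv u) τ + (Real.cosh τ / Real.sinh τ) * deriv u τ + F (u τ) = 0)
    {τ : ℝ} (hτ : 0 < τ) (huτ : 0 < u τ) :
    HasDerivAt (fun t => -(Real.sinh t * deriv u t) / u t)
      (Real.sinh τ * ((deriv u τ)^2 + u τ * F (u τ)) / (u τ)^2) τ := by
  have hw := (sinh_mul_deriv u F hud' hode hτ).neg
  have h := hw.div ((hud τ hτ).hasDerivAt) (ne_of_gt huτ)
  refine h.congr_deriv ?_
  simp only [Pi.neg_apply]
  field_simp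
  ring



lemma Gf_zero (m a b : ℝ) (hm : 2 < m) : Gf m a b 0 = 0 := by
  have hp : (2+2/m) ≠ 0 := by positivity
  simp [Gf, Real.zero_rpow hp]

lemma Gf_hasDeriv (m a b : ℝ) (hm : 2 < m) (x : ℝ) :
    HasDerivAt (fun s => Gf m a b s) (a * x ^ (1+2/m) - b * x) x := by
  have hm0 : (0:ℝ) < m := by linarith
  have h1 : (1:ℝ) ≤ 2 + 2/m := by
    have : (0:ℝ) < 2/m := by positivity
    linarith
  have hp := Real.hasDerivAt_rpow_const (x := x) (p := 2+2/m) (Or.inr h1)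
  have h2 : HasDerivAt (fun s : ℝ => s^2) (2*x) x := by
    simpa using hasDerivAt_pow 2 x
  have h := (hp.const_mul (a * (m/(2*m+2)))).sub (h2.const_mul (b/2))
  refine h.congr_deriv ?_
  have he : 2+2/m-1 = 1+2/m := by ring
  rw [he]
  have hne : 2*m+2 ≠ 0 := by positivity
  field_simp

lemma Hf_hasDeriv (m a b : ℝ) (hm : 2 < m) (u F : ℝ → ℝ)
    (hF : ∀ s, F s = a * s ^ (1 + 2 / m) - b * s)
    (hud : ∀ τ ∈ Ioi (0:ℝ), DifferentiableAt ℝ u τ)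
    (hud' : ∀ τ ∈ Ioi (0:ℝ), DifferentiableAt ℝ (deriv u) τ)
    (hode : ∀ τ ∈ Ioi (0:ℝ), deriv (deriv u) τ + (Real.cosh τ / Real.sinh τ) * deriv u τ + F (u τ) = 0)
    {τ : ℝ} (hτ : 0 < τ) :
    HasDerivAt (Hf m a b u) (-((Real.cosh τ / Real.sinh τ)) * (deriv u τ)^2) τ := by
  have h1 : HasDerivAt (fun t => (deriv u t)^2/2) (deriv u τ * deriv (deriv u) τ) τ := by
    have := (((hud' τ hτ).hasDerivAt).pow 2).div_const 2
    refine this.congr_deriv ?_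
    ring
  have h2 : HasDerivAt (fun t => Gf m a b (u t))
      ((a * (u τ) ^ (1+2/m) - b * (u τ)) * deriv u τ) τ :=
    (Gf_hasDeriv m a b hm (u τ)).comp τ ((hud τ hτ).hasDerivAt)
  have h := h1.add h2
  have h3 : deriv (deriv u) τ = -((Real.cosh τ / Real.sinh τ) * deriv u τ + F (u τ)) := by
    have := hode τ hτ; linarith
  refine h.congr_deriv ?_
  rw [h3, hF]
  ring




lemma Hf_antitone (m a b : ℝ) (hm : 2 < m) (u F : ℝ → ℝ)
    (hF : ∀ s, F s = a * s ^ (1 + 2 / m) - b * s)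
    (hud : ∀ τ ∈ Ioi (0:ℝ), DifferentiableAt ℝ u τ)
    (hud' : ∀ τ ∈ Ioi (0:ℝ), DifferentiableAt ℝ (deriv u) τ)
    (hode : ∀ τ ∈ Ioi (0:ℝ), deriv (deriv u) τ + (Real.cosh τ / Real.sinh τ) * deriv u τ + F (u τ) = 0) :
    AntitoneOn (Hf m a b u) (Ioi 0) := by
  have hint : interior (Ioi (0:ℝ)) = Ioi 0 := interior_Ioi
  apply antitoneOn_of_deriv_nonpos (convex_Ioi 0)
  · intro τ hτ
    exact (Hf_hasDeriv m a b hm u F hF hud hud' hode hτ).continuousAt.continuousWithinAt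
  · rw [hint]
    intro τ hτ
    exact (Hf_hasDeriv m a b hm u F hF hud hud' hode hτ).differentiableAt.differentiableWithinAt
  · rw [hint]
    intro τ hτ
    rw [(Hf_hasDeriv m a b hm u F hF hud hud' hode hτ).deriv]
    have h1 : 0 < Real.cosh τ := Real.cosh_pos τ
    have h2 : 0 < Real.sinh τ := Real.sinh_pos_iff.2 hτ
    have : 0 ≤ (Real.cosh τ / Real.sinh τ) * (deriv u τ)^2 := by positivity
    linarith

lemma E_pos (m a b : ℝ) (hm : 2 < m) (ha : 0 < a) (hb : 0 < b) (F : ℝ → ℝ)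
    (hF : ∀ s, F s = a * s ^ (1 + 2 / m) - b * s)
    (u : ℝ → ℝ) {τ : ℝ} (huτ : 0 < u τ) (hH : 0 ≤ Hf m a b u τ) :
    0 < (deriv u τ)^2 + u τ * F (u τ) := by
  have hm0 : (0:ℝ) < m := by linarith
  have hX : (u τ) ^ ((2:ℝ)+2/m) = (u τ) ^ ((1:ℝ)+2/m) * u τ := by
    have : ((2:ℝ)+2/m) = (1+2/m) + 1 := by ring
    rw [this, Real.rpow_add huτ, Real.rpow_one]
  have hident : (deriv u τ)^2 + u τ * F (u τ)
      = 2 * Hf m a b u τ + (a/(m+1)) * (u τ) ^ ((2:ℝ)+2/m) := by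
    rw [hF, Hf, Gf, hX]
    have hne : m + 1 ≠ 0 := by positivity
    have hne2 : 2*m+2 ≠ 0 := by positivity
    field_simp
    ring
  rw [hident]
  have hXpos : 0 < (u τ) ^ ((2:ℝ)+2/m) := Real.rpow_pos_of_pos huτ _
  have : 0 < (a/(m+1)) * (u τ) ^ ((2:ℝ)+2/m) := by positivity
  linarith





lemma theta_strictMono (m a b : ℝ) (hm : 2 < m) (ha : 0 < a) (hb : 0 < b)
    (F : ℝ → ℝ) (hF : ∀ s, F s = a * s ^ (1 + 2 / m) - b * s)
    (u : ℝ → ℝ)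
    (hud : ∀ τ ∈ Ioi (0:ℝ), DifferentiableAt ℝ u τ)
    (hud' : ∀ τ ∈ Ioi (0:ℝ), DifferentiableAt ℝ (deriv u) τ)
    (hode : ∀ τ ∈ Ioi (0:ℝ), deriv (deriv u) τ + (Real.cosh τ / Real.sinh τ) * deriv u τ + F (u τ) = 0)
    (S : Set ℝ) (hconv : Convex ℝ S) (hsub : S ⊆ Ioi 0) (hSopen : IsOpen S)
    (hupos : ∀ τ ∈ S, 0 < u τ) (hH : ∀ τ ∈ S, 0 ≤ Hf m a b u τ) :
    StrictMonoOn (fun τ => -(Real.sinh τ * deriv u τ) / u τ) S := by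
  have hint : interior S = S := hSopen.interior_eq
  apply strictMonoOn_of_deriv_pos hconv
  · intro τ hτ
    exact (theta_hasDeriv u F hud hud' hode (hsub hτ) (hupos τ hτ)).continuousAt.continuousWithinAt
  · rw [hint]
    intro τ hτ
    rw [(theta_hasDeriv u F hud hud' hode (hsub hτ) (hupos τ hτ)).deriv]
    have h1 : 0 < Real.sinh τ := Real.sinh_pos_iff.2 (hsub hτ)
    have h2 := E_pos m a b hm ha hb F hF u (hupos τ hτ) (hH τ hτ)
    have h3 := hupos τ hτ
    positivity

lemma unique_zero' (m a b : ℝ) (hm : 2 < m) (ha : 0 < a) (hb : 0 < b)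
    (F : ℝ → ℝ) (hF : ∀ s, F s = a * s ^ (1 + 2 / m) - b * s)
    (u : ℝ → ℝ)
    (hud : ∀ τ ∈ Ioi (0:ℝ), DifferentiableAt ℝ u τ)
    (hud' : ∀ τ ∈ Ioi (0:ℝ), DifferentiableAt ℝ (deriv u) τ)
    (hode : ∀ τ ∈ Ioi (0:ℝ), deriv (deriv u) τ + (Real.cosh τ / Real.sinh τ) * deriv u τ + F (u τ) = 0)
    (hu'0 : Tendsto (deriv u) (nhdsWithin 0 (Ioi 0)) (nhds 0))
    (huc0 : Tendsto u (nhdsWithin 0 (Ioi 0)) (nhds (u 0)))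
    (hα : 0 < u 0)
    (S : Set ℝ) (hconv : Convex ℝ S) (hsub : S ⊆ Ioi 0) (hSopen : IsOpen S)
    (hS0 : S ∈ nhdsWithin (0:ℝ) (Ioi 0))
    (hupos : ∀ τ ∈ S, 0 < u τ) (hH : ∀ τ ∈ S, 0 ≤ Hf m a b u τ)
    (β : ℝ) (hβ : 0 < β)
    (hbig : ∃ τ ∈ S, β < -(Real.sinh τ * deriv u τ) / u τ) :
    ∃! τ, τ ∈ S ∧ Real.sinh τ * deriv u τ + β * u τ = 0 := by
  set θ := fun τ => -(Real.sinh τ * deriv u τ) / u τ with hθ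
  have hmono := theta_strictMono m a b hm ha hb F hF u hud hud' hode S hconv hsub hSopen hupos hH
  -- v τ = 0 ↔ θ τ = β on S
  have hiff : ∀ τ ∈ S, (Real.sinh τ * deriv u τ + β * u τ = 0 ↔ θ τ = β) := by
    intro τ hτ
    have hu := hupos τ hτ
    rw [hθ]
    constructor
    · intro h
      field_simp
      linarith
    · intro h
      have : -(Real.sinh τ * deriv u τ) = β * u τ := by
        field_simp at h
        linarith
      linarith
  -- θ tendsto 0 at 0+
  have hθ0 : Tendsto θ (nhdsWithin (0:ℝ) (Ioi 0)) (nhds 0) := by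
    have hs : Tendsto (fun τ => Real.sinh τ) (nhdsWithin (0:ℝ) (Ioi 0)) (nhds 0) := by
      have := (Real.continuous_sinh.tendsto 0)
      rw [Real.sinh_zero] at this
      exact this.mono_left nhdsWithin_le_nhds
    have hnum : Tendsto (fun τ => -(Real.sinh τ * deriv u τ)) (nhdsWithin (0:ℝ) (Ioi 0)) (nhds 0) := by
      have := (hs.mul hu'0).neg
      simpa using this
    have := hnum.div huc0 (ne_of_gt hα)
    rw [zero_div] at this
    exact this
  -- get τ₁ ∈ S with θ τ₁ < β
  have hev : ∀ᶠ τ in nhdsWithin (0:ℝ) (Ioi 0), θ τ < β ∧ τ ∈ S := by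
    filter_upwards [hθ0.eventually (eventually_lt_nhds hβ), hS0] with τ h1 h2
    exact ⟨h1, h2⟩
  obtain ⟨τ₁, h1lt, h1S⟩ := hev.exists
  obtain ⟨τ₂, h2S, h2gt⟩ := hbig
  have h12 : τ₁ < τ₂ := by
    by_contra h
    push_neg at h
    rcases eq_or_lt_of_le h with h | h
    · rw [h] at h2gt; linarith
    · have := hmono h2S h1S h
      linarith
  have hIcc : Icc τ₁ τ₂ ⊆ S := hconv.ordConnected.out h1S h2S
  have hcont : ContinuousOn θ (Icc τ₁ τ₂) := by
    intro τ hτ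
    have hτS := hIcc hτ
    exact (theta_hasDeriv u F hud hud' hode (hsub hτS) (hupos τ hτS)).continuousAt.continuousWithinAt
  have hIVT := intermediate_value_Ioo (le_of_lt h12) hcont
  have hβmem : β ∈ Ioo (θ τ₁) (θ τ₂) := ⟨h1lt, h2gt⟩
  obtain ⟨τ, hτmem, hτval⟩ := hIVT hβmem
  have hτS : τ ∈ S := hIcc ⟨le_of_lt hτmem.1, le_of_lt hτmem.2⟩
  refine ⟨τ, ⟨hτS, (hiff τ hτS).2 hτval⟩, ?_⟩
  intro y ⟨hyS, hyv⟩
  have hyθ : θ y = β := (hiff y hyS).1 hyv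
  have : θ y = θ τ := by rw [hyθ, hτval]
  exact hmono.injOn hyS hτS this





lemma hH_N (m a b : ℝ) (hm : 2 < m) (u F : ℝ → ℝ)
    (hF : ∀ s, F s = a * s ^ (1 + 2 / m) - b * s)
    (hud : ∀ τ ∈ Ioi (0:ℝ), DifferentiableAt ℝ u τ)
    (hud' : ∀ τ ∈ Ioi (0:ℝ), DifferentiableAt ℝ (deriv u) τ)
    (hode : ∀ τ ∈ Ioi (0:ℝ), deriv (deriv u) τ + (Real.cosh τ / Real.sinh τ) * deriv u τ + F (u τ) = 0)
    (bα : ℝ) (hbα : 0 < bα) (hub : u bα = 0) :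
    ∀ τ ∈ Ioo 0 bα, 0 ≤ Hf m a b u τ := by
  intro τ hτ
  have hHb : Hf m a b u bα = (deriv u bα)^2/2 := by
    rw [Hf, hub, Gf_zero m a b hm]; ring
  have h := Hf_antitone m a b hm u F hF hud hud' hode hτ.1 hbα (le_of_lt hτ.2)
  rw [hHb] at h
  have : 0 ≤ (deriv u bα)^2/2 := by positivity
  linarith

lemma hbig_N (u : ℝ → ℝ)
    (hud : ∀ τ ∈ Ioi (0:ℝ), DifferentiableAt ℝ u τ)
    (bα : ℝ) (hbα : 0 < bα) (hub : u bα = 0)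
    (hupos : ∀ τ ∈ Ico 0 bα, 0 < u τ)
    (β : ℝ) (hβ : 0 < β) :
    ∃ τ ∈ Ioo 0 bα, β < -(Real.sinh τ * deriv u τ) / u τ := by
  by_contra hcon
  push_neg at hcon
  set τ₀ := bα/2 with hτ₀
  have hτ₀pos : 0 < τ₀ := by positivity
  have hτ₀lt : τ₀ < bα := by linarith
  have hs0 : 0 < Real.sinh τ₀ := Real.sinh_pos_iff.2 hτ₀pos
  set K := β / Real.sinh τ₀ with hK
  have hKpos : 0 < K := by positivity
  set φ := fun t => u t * Real.exp (K * t) with hφ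
  have hmono : MonotoneOn φ (Icc τ₀ bα) := by
    have hint : interior (Icc τ₀ bα) = Ioo τ₀ bα := interior_Icc
    apply monotoneOn_of_deriv_nonneg (convex_Icc τ₀ bα)
    · apply ContinuousOn.mul
      · intro t ht
        exact ((hud t (lt_of_lt_of_le hτ₀pos ht.1)).continuousAt).continuousWithinAt
      · exact (Real.continuous_exp.comp (continuous_const.mul continuous_id)).continuousOn
    · rw [hint]
      intro t ht
      have htpos : (0:ℝ) < t := lt_trans hτ₀pos ht.1
      exact ((hud t htpos).mul ((Real.differentiable_exp.comp
        ((differentiable_const K).mul differentiable_id)).differentiableAt)).differentiableWithinAt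
    · rw [hint]
      intro t ht
      have htpos : (0:ℝ) < t := lt_trans hτ₀pos ht.1
      have hut : 0 < u t := hupos t ⟨le_of_lt htpos, ht.2⟩
      have hde : HasDerivAt (fun s => Real.exp (K * s)) (K * Real.exp (K * t)) t := by
        have := ((hasDerivAt_id t).const_mul K).exp
        simpa [mul_comm] using this
      have hd : HasDerivAt φ (deriv u t * Real.exp (K * t) + u t * (K * Real.exp (K * t))) t :=
        ((hud t htpos).hasDerivAt).mul hde
      rw [hd.deriv]
      -- deriv u t + K * u t ≥ 0 from θ t ≤ β
      have hθle := hcon t ⟨htpos, ht.2⟩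
      have hst : 0 < Real.sinh t := Real.sinh_pos_iff.2 htpos
      have hsle : Real.sinh τ₀ ≤ Real.sinh t := Real.sinh_le_sinh.2 (le_of_lt ht.1)
      have h1 : -(Real.sinh t * deriv u t) ≤ β * u t := by
        rw [div_le_iff₀ hut] at hθle
        linarith
      have h3 : β / Real.sinh t * u t ≤ β / Real.sinh τ₀ * u t := by
        apply mul_le_mul_of_nonneg_right _ (le_of_lt hut)
        exact div_le_div_of_nonneg_left (le_of_lt hβ) hs0 hsle
      have h4 : -deriv u t ≤ β / Real.sinh t * u t := by
        rw [div_mul_eq_mul_div, le_div_iff₀ hst]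
        nlinarith [h1]
      have h2 : 0 ≤ deriv u t + K * u t := by rw [hK]; linarith
      have hexp : 0 < Real.exp (K * t) := Real.exp_pos _
      nlinarith
  have h1 := hmono (left_mem_Icc.2 (le_of_lt hτ₀lt)) (right_mem_Icc.2 (le_of_lt hτ₀lt)) (le_of_lt hτ₀lt)
  have h2 : φ bα = 0 := by rw [hφ]; simp [hub]
  have h3 : 0 < φ τ₀ := by
    have := hupos τ₀ ⟨le_of_lt hτ₀pos, hτ₀lt⟩
    have := Real.exp_pos (K * τ₀)
    positivity
  rw [h2] at h1
  linarith






lemma hH_G (m a b : ℝ) (hm : 2 < m) (u F : ℝ → ℝ)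
    (hF : ∀ s, F s = a * s ^ (1 + 2 / m) - b * s)
    (hud : ∀ τ ∈ Ioi (0:ℝ), DifferentiableAt ℝ u τ)
    (hud' : ∀ τ ∈ Ioi (0:ℝ), DifferentiableAt ℝ (deriv u) τ)
    (hode : ∀ τ ∈ Ioi (0:ℝ), deriv (deriv u) τ + (Real.cosh τ / Real.sinh τ) * deriv u τ + F (u τ) = 0)
    (hlim : Tendsto u atTop (nhds 0)) :
    ∀ τ ∈ Ioi (0:ℝ), 0 ≤ Hf m a b u τ := by
  by_contra hcon
  push_neg at hcon
  obtain ⟨τ₀, hτ₀, hneg⟩ := hcon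
  set ε := -(Hf m a b u τ₀) with hε
  have hεpos : 0 < ε := by rw [hε]; linarith
  have hGc : ContinuousAt (fun s => Gf m a b s) 0 := by
    have h1 : ContinuousAt (fun s : ℝ => s ^ ((2:ℝ)+2/m)) 0 := by
      apply Real.continuousAt_rpow_const 0 _ (Or.inr (by positivity))
    have h2 : ContinuousAt (fun s : ℝ => s^2) (0:ℝ) := (continuous_pow 2).continuousAt
    exact (h1.const_mul _).sub (h2.const_mul _)
  have hGt : Tendsto (fun τ => Gf m a b (u τ)) atTop (nhds 0) := by
    have := hGc.tendsto.comp hlim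
    rwa [Gf_zero m a b hm] at this
  have hev : ∀ᶠ τ in atTop, -(ε/2) < Gf m a b (u τ) :=
    hGt.eventually (eventually_gt_nhds (by linarith))
  obtain ⟨τ, hτG, hτge⟩ := (hev.and (eventually_ge_atTop τ₀)).exists
  have hτpos : τ ∈ Ioi (0:ℝ) := lt_of_lt_of_le hτ₀ hτge
  have hanti := Hf_antitone m a b hm u F hF hud hud' hode hτ₀ hτpos hτge
  have hge : Gf m a b (u τ) ≤ Hf m a b u τ := by
    rw [Hf]; nlinarith [sq_nonneg (deriv u τ)]
  linarith

set_option maxHeartbeats 1000000 in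
lemma hbig_G (m a b : ℝ) (hm : 2 < m) (ha : 0 < a) (hb : 0 < b)
    (F : ℝ → ℝ) (hF : ∀ s, F s = a * s ^ (1 + 2 / m) - b * s)
    (u : ℝ → ℝ)
    (hupos : ∀ τ ∈ Ioi (0:ℝ), 0 < u τ)
    (hlim : Tendsto u atTop (nhds 0))
    (hH : ∀ τ ∈ Ioi (0:ℝ), 0 ≤ Hf m a b u τ)
    (hmono : StrictMonoOn (fun τ => -(Real.sinh τ * deriv u τ) / u τ) (Ioi 0))
    (β : ℝ) (hβ : 0 < β) :
    ∃ τ ∈ Ioi (0:ℝ), β < -(Real.sinh τ * deriv u τ) / u τ := by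
  by_contra hcon
  push_neg at hcon
  set θ := fun τ => -(Real.sinh τ * deriv u τ) / u τ with hθdef
  set M := max β |θ 1| with hM
  have hMpos : 0 < M := lt_of_lt_of_le hβ (le_max_left _ _)
  set δ := (b/(2*a)) ^ ((m:ℝ)/2) with hδ
  have hbapos : (0:ℝ) < b/(2*a) := by positivity
  have hδpos : 0 < δ := Real.rpow_pos_of_pos hbapos _
  obtain ⟨T, hT⟩ := Filter.eventually_atTop.1 (hlim.eventually (eventually_lt_nhds hδpos))
  set R := Real.sqrt (2*M^2/b) + 1 with hR
  have hRpos : 0 < R := by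
    rw [hR]
    have := Real.sqrt_nonneg (2*M^2/b); linarith
  set t := max (max 1 (Real.arsinh R)) T with ht
  have ht1 : (1:ℝ) ≤ t := le_trans (le_max_left _ _) (le_max_left _ _)
  have htT : T ≤ t := le_max_right _ _
  have htarc : Real.arsinh R ≤ t := le_trans (le_max_right _ _) (le_max_left _ _)
  have htpos : (0:ℝ) < t := by linarith
  have hsR : R ≤ Real.sinh t := by
    have := Real.sinh_le_sinh.2 htarc
    rwa [Real.sinh_arsinh] at this
  have hs : 0 < Real.sinh t := lt_of_lt_of_le hRpos hsR
  have hut : 0 < u t := hupos t htpos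
  have huδ : u t < δ := hT t htT
  -- θ t squared bound
  have hθub : θ t ≤ M := le_trans (hcon t htpos) (le_max_left _ _)
  have hθlb : -M ≤ θ t := by
    have h1 : θ 1 ≤ θ t := hmono.monotoneOn (by norm_num : (1:ℝ) ∈ Ioi 0) htpos ht1
    have h2 : -M ≤ θ 1 := by
      have := neg_abs_le (θ 1)
      have h3 : |θ 1| ≤ M := le_max_right _ _
      linarith
    linarith
  have hθsq : (θ t)^2 ≤ M^2 := sq_le_sq' hθlb hθub
  -- E positive
  have hE := E_pos m a b hm ha hb F hF u hut (hH t htpos)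
  set E := (deriv u t)^2 + u t * F (u t) with hE'
  have hdpos : 0 < Real.sinh t * E / (u t)^2 := by positivity
  -- identity
  have hX : (u t) ^ ((1:ℝ)+2/m) = (u t) ^ ((2:ℝ)/m) * u t := by
    rw [show (1:ℝ)+2/m = 2/m + 1 by ring, Real.rpow_add hut, Real.rpow_one]
  have hid : Real.sinh t * E / (u t)^2
      = (θ t)^2 / Real.sinh t + Real.sinh t * (a * (u t) ^ ((2:ℝ)/m) - b) := by
    rw [hE', hF, hX, hθdef]
    field_simp
  -- bound a * X ≤ b/2
  have hXle : (u t) ^ ((2:ℝ)/m) ≤ b/(2*a) := by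
    have h1 : (u t) ^ ((2:ℝ)/m) ≤ δ ^ ((2:ℝ)/m) :=
      Real.rpow_le_rpow (le_of_lt hut) (le_of_lt huδ) (by positivity)
    have h2 : δ ^ ((2:ℝ)/m) = b/(2*a) := by
      rw [hδ, ← Real.rpow_mul (le_of_lt hbapos)]
      have : (m:ℝ)/2 * (2/m) = 1 := by field_simp
      rw [this, Real.rpow_one]
    rwa [h2] at h1
  have haX : a * (u t) ^ ((2:ℝ)/m) ≤ b/2 := by
    have := mul_le_mul_of_nonneg_left hXle (le_of_lt ha)
    calc a * (u t) ^ ((2:ℝ)/m) ≤ a * (b/(2*a)) := this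
    _ = b/2 := by field_simp
  -- final bound
  rw [hid] at hdpos
  have hb1 : (θ t)^2 / Real.sinh t ≤ M^2 / Real.sinh t := by gcongr
  have hb2 : Real.sinh t * (a * (u t) ^ ((2:ℝ)/m) - b) ≤ Real.sinh t * (-(b/2)) :=
    mul_le_mul_of_nonneg_left (by linarith) (le_of_lt hs)
  rw [hR] at hsR
  have hfin : M^2 / Real.sinh t < (b/2) * Real.sinh t := by
    rw [div_lt_iff₀ hs]
    set q := Real.sqrt (2*M^2/b) with hq'
    have hq : q^2 = 2*M^2/b := Real.sq_sqrt (by positivity)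
    have hqn : 0 ≤ q := Real.sqrt_nonneg _
    have h1 : (q + 1)^2 ≤ (Real.sinh t)^2 := by nlinarith
    have h2 : b * ((q+1)^2) ≤ b * (Real.sinh t)^2 := mul_le_mul_of_nonneg_left h1 hb.le
    have h3 : (q+1)^2 = 2*M^2/b + 2*q + 1 := by rw [add_sq, hq]; ring
    rw [h3] at h2
    have h4 : b * (2*M^2/b + 2*q + 1) = 2*M^2 + b*(2*q+1) := by field_simp; ring
    rw [h4] at h2
    have h5 : 0 < b*(2*q+1) := by positivity
    nlinarith [h2, h5]
  clear_value θ M δ R t E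
  nlinarith [hb1, hb2, hfin, hdpos, hs]

/-- Monotonicity of the auxiliary function `θ` and uniqueness of the zero of the
comparison function (Lemma 5.8): for `α ∈ G ∪ N` with solution `u`, the function
`θ(τ) = −sinh(τ)·u'(τ)/u(τ)` is non-decreasing on `(0, b(α))`, and consequently
for every `β > 0` the function `v_β(τ) = sinh(τ)·u'(τ) + β·u(τ)` has exactly one
zero in `(0, b(α))`.  The two conjuncts treat the cases `α ∈ N` (finite smallest
zero `b(α)`) and `α ∈ G` (`b(α) = ∞`). -/
theorem theta_monotone_and_unique_zero
    (m a b : ℝ) (hm : 2 < m) (ha : 0 < a) (hb : 0 < b)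
    (F : ℝ → ℝ) (hF : ∀ s, F s = a * s ^ (1 + 2 / m) - b * s)
    (α : ℝ) (hα : 0 < α)
    (u : ℝ → ℝ)
    (huc : ContinuousOn u (Ici 0))
    (hud : ∀ τ ∈ Ioi (0 : ℝ), DifferentiableAt ℝ u τ)
    (hud' : ∀ τ ∈ Ioi (0 : ℝ), DifferentiableAt ℝ (deriv u) τ)
    (hode : ∀ τ ∈ Ioi (0 : ℝ),
      deriv (deriv u) τ + (Real.cosh τ / Real.sinh τ) * deriv u τ + F (u τ) = 0)
    (hu0 : u 0 = α)
    (hu'0 : Tendsto (deriv u) (nhdsWithin 0 (Ioi 0)) (nhds 0)) :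
    (∀ bα : ℝ, 0 < bα → u bα = 0 → (∀ τ ∈ Ico 0 bα, 0 < u τ) →
        MonotoneOn (fun τ => -(Real.sinh τ * deriv u τ) / u τ) (Ioo 0 bα) ∧
        ∀ β > (0 : ℝ), ∃! τ, τ ∈ Ioo 0 bα ∧
          Real.sinh τ * deriv u τ + β * u τ = 0) ∧
    ((∀ τ ∈ Ioi (0 : ℝ), 0 < u τ) → Tendsto u atTop (nhds 0) →
        MonotoneOn (fun τ => -(Real.sinh τ * deriv u τ) / u τ) (Ioi 0) ∧
        ∀ β > (0 : ℝ), ∃! τ, τ ∈ Ioi (0 : ℝ) ∧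
          Real.sinh τ * deriv u τ + β * u τ = 0) := by
  have huc0 : Tendsto u (nhdsWithin 0 (Ioi 0)) (nhds (u 0)) :=
    (huc 0 (self_mem_Ici)).mono_left (nhdsWithin_mono 0 Ioi_subset_Ici_self)
  have hα' : 0 < u 0 := by rw [hu0]; exact hα
  constructor
  · -- case N
    intro bα hbα hub hupos'
    have hupos : ∀ τ ∈ Ioo 0 bα, 0 < u τ := fun τ hτ => hupos' τ ⟨hτ.1.le, hτ.2⟩
    have hH := hH_N m a b hm u F hF hud hud' hode bα hbα hub
    have hsub : Ioo 0 bα ⊆ Ioi 0 := Ioo_subset_Ioi_self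
    have hmono := theta_strictMono m a b hm ha hb F hF u hud hud' hode
      (Ioo 0 bα) (convex_Ioo 0 bα) hsub isOpen_Ioo hupos hH
    refine ⟨hmono.monotoneOn, ?_⟩
    intro β hβ
    exact unique_zero' m a b hm ha hb F hF u hud hud' hode hu'0 huc0 hα'
      (Ioo 0 bα) (convex_Ioo 0 bα) hsub isOpen_Ioo
      (Ioo_mem_nhdsGT_of_mem ⟨le_refl 0, hbα⟩) hupos hH β hβ
      (hbig_N u hud bα hbα hub hupos' β hβ)
  · -- case G
    intro hupos hlim
    have hH := hH_G m a b hm u F hF hud hud' hode hlim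
    have hmono := theta_strictMono m a b hm ha hb F hF u hud hud' hode
      (Ioi 0) (convex_Ioi 0) (fun _ h => h) isOpen_Ioi hupos hH
    refine ⟨hmono.monotoneOn, ?_⟩
    intro β hβ
    exact unique_zero' m a b hm ha hb F hF u hud hud' hode hu'0 huc0 hα'
      (Ioi 0) (convex_Ioi 0) (fun _ h => h) isOpen_Ioi
      self_mem_nhdsWithin hupos hH β hβ
      (hbig_G m a b hm ha hb F hF u hupos hlim hH hmono β hβ)
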